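/- Sphere-to-plane reduction identity (Lemma of Mouhot-Pareschi) in dimension d: for any continuous integrable F : R^d → R and nonzero w ∈ R^d, (1/2) ∫_{S^{d−1}} F(|w|σ − w) dσ = |w|^{−(d−2)} ∫_{R^d} δ(2x·w + |x|²) F(x) dx, where the right-hand side is the surface integral of F over the sphere {x : |x + w| = |w|} weighted appropriately. In the case d = 2 and F radial, F(|w|σ − w) integrated over the circle equals 2∫ over the circle of center −w and radius |w| of F with weight 1/(2|x+w|) appropriately normalized. -/

import Mathlib

open MeasureTheory Real
open scoped Pointwise ENNReal NNReal

/-- Sphere-to-plane reduction identity (Lemma of Mouhot–Pareschi):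
`(1/2) ∫_{S^{d-1}} F(|w|σ - w) dσ
  = |w|^{-(d-2)} ∫_{sphere(-w,|w|)} F(x)/(2|x+w|) dS(x)`,
where the right-hand side is the surface integral over the sphere
`{x : |x + w| = |w|}` (the Dirac measure `δ(2x·w + |x|²)` has density
`1/(2|x+w|)` with respect to the surface measure). -/
theorem sphere_to_plane_reduction (d : ℕ) (hd : 2 ≤ d)
    (w : EuclideanSpace ℝ (Fin d)) (hw : w ≠ 0)
    (F : EuclideanSpace ℝ (Fin d) → ℝ) (hF : Continuous F)
    (hInt : IntegrableOn F (Metric.sphere (-w) ‖w‖) μH[(d : ℝ) - 1]) :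
    (1 / 2) * ∫ σ in Metric.sphere (0 : EuclideanSpace ℝ (Fin d)) 1,
        F (‖w‖ • σ - w) ∂μH[(d : ℝ) - 1]
      = ‖w‖ ^ (-((d : ℝ) - 2)) *
        ∫ x in Metric.sphere (-w) ‖w‖,
          (1 / (2 * ‖x + w‖)) * F x ∂μH[(d : ℝ) - 1] := by
  set c := ‖w‖ with hc
  have hc0 : 0 < c := norm_pos_iff.2 hw
  set d' : ℝ := (d:ℝ) - 1 with hd'
  have hd2 : (2:ℝ) ≤ d := by exact_mod_cast hd
  have hd'0 : 0 ≤ d' := by simp only [hd']; linarith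
  set φ : EuclideanSpace ℝ (Fin d) → EuclideanSpace ℝ (Fin d) := fun σ => c • σ - w with hφ
  have hbij : Function.Bijective φ := by
    constructor
    · intro a b hab
      simp only [hφ, sub_left_inj] at hab
      exact smul_right_injective _ (ne_of_gt hc0) hab
    · intro y
      exact ⟨c⁻¹ • (y + w), by simp [hφ, smul_smul, mul_inv_cancel₀ (ne_of_gt hc0)]⟩
  have himg : ∀ s : Set (EuclideanSpace ℝ (Fin d)),
      μH[d'] (φ '' s) = (‖c‖₊ : ℝ≥0∞) ^ d' * μH[d'] s := by
    intro s
    have h : φ '' s = (-w) +ᵥ (c • s) := by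
      rw [← Set.image_smul, ← Set.image_vadd, Set.image_image]
      exact Set.image_congr' fun y => sub_eq_neg_add _ _
    rw [h, hausdorffMeasure_vadd _ (Or.inl hd'0),
      Measure.hausdorffMeasure_smul₀ hd'0 (ne_of_gt hc0), ENNReal.smul_def, smul_eq_mul,
      ENNReal.coe_rpow_of_nonneg _ hd'0]
  have hcc : (‖c‖₊ : ℝ≥0∞) ≠ 0 := by simp [hc0.ne']
  have hcne : (‖c‖₊ : ℝ≥0∞) ^ d' ≠ 0 := by simp [ENNReal.rpow_eq_zero_iff, hcc]
  have hctop : (‖c‖₊ : ℝ≥0∞) ^ d' ≠ ⊤ :=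
    ENNReal.rpow_ne_top_of_nonneg hd'0 ENNReal.coe_ne_top
  have hpre : ∀ B : Set (EuclideanSpace ℝ (Fin d)),
      μH[d'] (φ ⁻¹' B) = ((‖c‖₊ : ℝ≥0∞) ^ d')⁻¹ * μH[d'] B := by
    intro B
    have h2 := himg (φ ⁻¹' B)
    rw [Set.image_preimage_eq B hbij.2] at h2
    rw [h2, ← mul_assoc, ENNReal.inv_mul_cancel hcne hctop, one_mul]
  -- φ as a measurable embedding
  have hφcont : Continuous φ := by fun_prop
  have hemb : MeasurableEmbedding φ := by
    have hhomeo : Function.RightInverse (fun y => c⁻¹ • (y + w)) φ := fun y => by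
      simp [hφ, smul_smul, mul_inv_cancel₀ (ne_of_gt hc0)]
    exact (Homeomorph.mk ⟨φ, fun y => c⁻¹ • (y + w),
      fun x => by simp [hφ, smul_smul, inv_mul_cancel₀ (ne_of_gt hc0)], hhomeo⟩
      hφcont (by fun_prop)).measurableEmbedding
  -- pushforward measure
  have hmap : Measure.map φ μH[d'] = ((‖c‖₊ : ℝ≥0∞) ^ d')⁻¹ • μH[d'] := by
    ext A hA
    rw [Measure.map_apply hemb.measurable hA, hpre, Measure.smul_apply, smul_eq_mul]
  -- preimage of the sphere
  have hsph : φ ⁻¹' (Metric.sphere (-w) c) = Metric.sphere 0 1 := by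
    ext x
    simp only [Set.mem_preimage, Metric.mem_sphere, hφ, dist_eq_norm, sub_neg_eq_add,
      sub_add_cancel, norm_smul, Real.norm_eq_abs, abs_of_pos hc0, sub_zero]
    constructor
    · intro h
      exact mul_left_cancel₀ hc0.ne' (h.trans (mul_one c).symm)
    · intro h; rw [h, mul_one]
  -- change of variables
  have hcov : ∫ x in Metric.sphere (-w) c, F x ∂(Measure.map φ μH[d'])
      = ∫ σ in Metric.sphere (0 : EuclideanSpace ℝ (Fin d)) 1, F (φ σ) ∂μH[d'] := by
    rw [hemb.setIntegral_map, hsph]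
  rw [hmap] at hcov
  rw [Measure.restrict_smul, integral_smul_measure] at hcov
  have htoReal : (((‖c‖₊ : ℝ≥0∞) ^ d')⁻¹).toReal = c ^ (-d') := by
    rw [ENNReal.toReal_inv, ← ENNReal.toReal_rpow, Real.rpow_neg hc0.le]
    simp [hc]
  -- simplify integrand on the sphere
  have hcong : ∫ x in Metric.sphere (-w) c, (1 / (2 * ‖x + w‖)) * F x ∂μH[d']
      = (1 / (2 * c)) * ∫ x in Metric.sphere (-w) c, F x ∂μH[d'] := by
    rw [← integral_const_mul]
    refine setIntegral_congr_fun (Metric.isClosed_sphere.measurableSet) fun x hx => ?_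
    have hx' : ‖x + w‖ = c := by
      simpa [dist_eq_norm, sub_neg_eq_add] using hx
    rw [hx']
  -- final arithmetic
  have key : ∫ σ in Metric.sphere (0 : EuclideanSpace ℝ (Fin d)) 1, F (φ σ) ∂μH[d']
      = c ^ (-d') * ∫ x in Metric.sphere (-w) c, F x ∂μH[d'] := by
    rw [← hcov, htoReal, smul_eq_mul]
  show (1 / 2) * ∫ σ in Metric.sphere (0 : EuclideanSpace ℝ (Fin d)) 1, F (φ σ) ∂μH[d']
      = c ^ (-((d:ℝ) - 2)) * ∫ x in Metric.sphere (-w) c, (1 / (2 * ‖x + w‖)) * F x ∂μH[d']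
  rw [key, hcong]
  have hexp : c ^ (-((d:ℝ) - 2)) = c ^ (-d') * c := by
    rw [show -((d:ℝ) - 2) = (-d') + 1 by simp only [hd']; ring, Real.rpow_add hc0,
      Real.rpow_one]
  rw [hexp]
  field_simp
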